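/- Conditioning preserves majorization: Let f and g be pdfs on ℝ with f even and quasi-concave and f majorizing g. Let c > 0 and h: ℝ → [0,1] be measurable with ∫ f(x) 1_{(-c,c)}(x) dx = ∫ g(x) h(x) dx > 0. Then the normalized pdf f(x)1_{(-c,c)}(x) / ∫ f 1_{(-c,c)} majorizes the normalized pdf g(x)h(x) / ∫ g h. -/

import Mathlib

open MeasureTheory

/-- `f` majorizes `g`. -/
def Majorizes (f g : ℝ → ℝ) : Prop :=
  ∀ B : Set ℝ, MeasurableSet B → volume B < ⊤ →
    ∃ A : Set ℝ, MeasurableSet A ∧ volume A = volume B ∧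
      (∫ x in B, g x) ≤ ∫ x in A, f x

/-- `f` is a probability density function on `ℝ`. -/
def IsPdf (f : ℝ → ℝ) : Prop :=
  (∀ x, 0 ≤ f x) ∧ Integrable f ∧ (∫ x, f x) = 1

/-- `f` is even. -/
def EvenFun (f : ℝ → ℝ) : Prop := ∀ x, f (-x) = f x

/-- `f` is quasi-concave. -/
def QuasiConcave (f : ℝ → ℝ) : Prop :=
  ∀ x y : ℝ, ∀ lam : ℝ, 0 ≤ lam → lam ≤ 1 →
    min (f x) (f y) ≤ f (lam * x + (1 - lam) * y)

/-- An even quasi-concave function is nonincreasing in `|x|`. -/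
lemma mono_of_even_qc {f : ℝ → ℝ} (hfe : EvenFun f) (hfq : QuasiConcave f) :
    ∀ x y : ℝ, |x| ≤ |y| → f y ≤ f x := by
  intro x y hxy
  have hy : f y = f |y| := by
    rcases abs_choice y with hy | hy
    · rw [hy]
    · rw [hy, hfe]
  rw [hy]
  rcases eq_or_lt_of_le (abs_nonneg y) with h0 | h0
  · have hx0 : x = 0 := by
      rw [← h0] at hxy
      exact abs_nonpos_iff.mp hxy
    rw [← h0, hx0]
  · set Y := |y| with hY
    set lam : ℝ := (x + Y) / (2 * Y) with hlam
    have hYne : (2 : ℝ) * Y ≠ 0 := by positivity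
    have hl0 : 0 ≤ lam := by
      apply div_nonneg _ (by positivity)
      have := neg_abs_le x
      linarith [hxy]
    have hl1 : lam ≤ 1 := by
      rw [div_le_one (by positivity)]
      have := le_abs_self x
      linarith [hxy]
    have hxeq : lam * Y + (1 - lam) * (-Y) = x := by
      field_simp [hlam]
      have h2 : lam * (2 * Y) = x + Y := by rw [hlam]; exact div_mul_cancel₀ _ hYne
      linear_combination h2
    have := hfq Y (-Y) lam hl0 hl1
    rw [hxeq, hfe Y, min_self] at this
    exact this

/-- A symmetric interval maximizes `∫ f` over sets of the same measure,
when `f` is nonincreasing in `|x|`. -/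
lemma setIntegral_le_symm {f : ℝ → ℝ} (hfi : Integrable f)
    (hmono : ∀ x y : ℝ, |x| ≤ |y| → f y ≤ f x) (m : ℝ) (hm : 0 ≤ m)
    (A' : Set ℝ) (hA'm : MeasurableSet A') (hvol : volume A' = ENNReal.ofReal m) :
    (∫ x in A', f x) ≤ ∫ x in Set.Ioo (-(m/2)) (m/2), f x := by
  set A : Set ℝ := Set.Ioo (-(m/2)) (m/2) with hA_def
  have hA : MeasurableSet A := measurableSet_Ioo
  have hvolA : volume A = ENNReal.ofReal m := by
    rw [hA_def, Real.volume_Ioo]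
    norm_num
  set t : ℝ := f (m / 2) with ht
  have hub : ∀ x ∈ A' \ A, f x ≤ t := by
    intro x hx
    apply hmono (m/2) x
    have hxA : x ∉ A := hx.2
    rw [hA_def, Set.mem_Ioo] at hxA
    push_neg at hxA
    rw [abs_of_nonneg (by linarith : (0:ℝ) ≤ m/2)]
    rcases le_or_gt x (-(m/2)) with hx1 | hx1
    · calc m/2 ≤ -x := by linarith
        _ ≤ |x| := neg_le_abs x
    · exact le_trans (hxA hx1) (le_abs_self x)
  have hlb : ∀ x ∈ A \ A', t ≤ f x := by
    intro x hx
    apply hmono x (m/2)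
    have hxA : x ∈ A := hx.1
    rw [hA_def, Set.mem_Ioo] at hxA
    rw [abs_of_nonneg (by linarith : (0:ℝ) ≤ m/2)]
    rw [abs_le]
    constructor <;> linarith [hxA.1, hxA.2]
  -- measures of the two differences agree
  have hfinA' : volume A' ≠ ⊤ := by rw [hvol]; exact ENNReal.ofReal_ne_top
  have hfinA : volume A ≠ ⊤ := by rw [hvolA]; exact ENNReal.ofReal_ne_top
  have hsplit1 : volume (A' ∩ A) + volume (A' \ A) = volume A' :=
    measure_inter_add_diff A' hA
  have hsplit2 : volume (A ∩ A') + volume (A \ A') = volume A :=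
    measure_inter_add_diff A hA'm
  have hinter : volume (A ∩ A') = volume (A' ∩ A) := by rw [Set.inter_comm]
  have hfinI : volume (A' ∩ A) ≠ ⊤ := by
    exact ne_top_of_le_ne_top hfinA' (measure_mono Set.inter_subset_left)
  have hdiff : volume (A' \ A) = volume (A \ A') := by
    have : volume (A' ∩ A) + volume (A' \ A) = volume (A' ∩ A) + volume (A \ A') := by
      rw [hsplit1, hvol, ← hvolA, ← hsplit2, hinter]
    exact (ENNReal.add_right_inj hfinI).mp this
  have hfinD1 : volume (A' \ A) < ⊤ :=
    lt_of_le_of_lt (measure_mono Set.diff_subset) (lt_top_iff_ne_top.mpr hfinA')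
  have hfinD2 : volume (A \ A') < ⊤ :=
    lt_of_le_of_lt (measure_mono Set.diff_subset) (lt_top_iff_ne_top.mpr hfinA)
  -- bound the integrals over the differences by the constant t
  have hb1 : (∫ x in A' \ A, f x) ≤ (volume (A' \ A)).toReal * t := by
    have := setIntegral_mono_on hfi.integrableOn
      (integrableOn_const (C := t) hfinD1.ne) (hA'm.diff hA) hub
    simpa [setIntegral_const, smul_eq_mul, Measure.real] using this
  have hb2 : (volume (A \ A')).toReal * t ≤ ∫ x in A \ A', f x := by
    have := setIntegral_mono_on (integrableOn_const (C := t) hfinD2.ne)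
      hfi.integrableOn (hA.diff hA'm) hlb
    simpa [setIntegral_const, smul_eq_mul, Measure.real] using this
  have e1 : (∫ x in A', f x) = (∫ x in A' ∩ A, f x) + ∫ x in A' \ A, f x :=
    (integral_inter_add_diff hA hfi.integrableOn).symm
  have e2 : (∫ x in A, f x) = (∫ x in A ∩ A', f x) + ∫ x in A \ A', f x :=
    (integral_inter_add_diff hA'm hfi.integrableOn).symm
  rw [e1, e2, Set.inter_comm A A']
  have : (∫ x in A' \ A, f x) ≤ ∫ x in A \ A', f x := by
    calc (∫ x in A' \ A, f x) ≤ (volume (A' \ A)).toReal * t := hb1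
      _ = (volume (A \ A')).toReal * t := by rw [hdiff]
      _ ≤ ∫ x in A \ A', f x := hb2
  linarith

/-- Conditioning preserves majorization (Lemma 2 of Lipsa–Martins). -/
theorem majorizes_of_conditioning (f g h : ℝ → ℝ) (c : ℝ)
    (hf : IsPdf f) (hg : IsPdf g)
    (hfe : EvenFun f) (hfq : QuasiConcave f)
    (hmaj : Majorizes f g)
    (hc : 0 < c)
    (hh : Measurable h) (hh0 : ∀ x, 0 ≤ h x) (hh1 : ∀ x, h x ≤ 1)
    (heq : (∫ x, f x * Set.indicator (Set.Ioo (-c) c) (fun _ => (1:ℝ)) x)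
            = ∫ x, g x * h x)
    (hpos : 0 < ∫ x, g x * h x) :
    Majorizes
      (fun x => f x * Set.indicator (Set.Ioo (-c) c) (fun _ => (1:ℝ)) x /
        (∫ x, f x * Set.indicator (Set.Ioo (-c) c) (fun _ => (1:ℝ)) x))
      (fun x => g x * h x / (∫ x, g x * h x)) := by
  classical
  set S : Set ℝ := Set.Ioo (-c) c with hS_def
  have hS : MeasurableSet S := measurableSet_Ioo
  have hFind : (fun x => f x * Set.indicator S (fun _ => (1:ℝ)) x) = S.indicator f := by
    funext x
    by_cases hx : x ∈ S <;> simp [Set.indicator, hx]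
  have hFint : Integrable (S.indicator f) := hf.2.1.indicator hS
  have hGHint : Integrable (fun x => g x * h x) := by
    apply Integrable.mono hg.2.1
      (hg.2.1.aestronglyMeasurable.mul hh.aestronglyMeasurable)
    filter_upwards with x
    simp only [Pi.mul_apply, Real.norm_eq_abs]
    rw [abs_mul, abs_of_nonneg (hg.1 x), abs_of_nonneg (hh0 x)]
    calc g x * h x ≤ g x * 1 := mul_le_mul_of_nonneg_left (hh1 x) (hg.1 x)
      _ = g x := mul_one _
  have hGHnn : ∀ x, 0 ≤ g x * h x := fun x => mul_nonneg (hg.1 x) (hh0 x)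
  set Z : ℝ := ∫ x, g x * h x with hZ_def
  intro B hB hBfin
  set m : ℝ := (volume B).toReal with hm_def
  have hm0 : 0 ≤ m := ENNReal.toReal_nonneg
  have hmvol : ENNReal.ofReal m = volume B := ENNReal.ofReal_toReal hBfin.ne
  have key : ∃ A : Set ℝ, MeasurableSet A ∧ volume A = volume B ∧
      (∫ x in B, g x * h x) ≤ ∫ x in A, S.indicator f x := by
    by_cases hcase : m < 2 * c
    · -- small case : symmetric interval
      refine ⟨Set.Ioo (-(m/2)) (m/2), measurableSet_Ioo, ?_, ?_⟩
      · rw [Real.volume_Ioo, ← hmvol]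
        norm_num
      · have hsub : Set.Ioo (-(m/2)) (m/2) ⊆ S := by
          rw [hS_def]
          apply Set.Ioo_subset_Ioo <;> linarith
        have h1 : (∫ x in B, g x * h x) ≤ ∫ x in B, g x := by
          apply setIntegral_mono_on hGHint.integrableOn hg.2.1.integrableOn hB
          intro x _
          calc g x * h x ≤ g x * 1 := mul_le_mul_of_nonneg_left (hh1 x) (hg.1 x)
            _ = g x := mul_one _
        obtain ⟨A', hA'm, hA'v, hA'le⟩ := hmaj B hB hBfin
        have h2 : (∫ x in A', f x) ≤ ∫ x in Set.Ioo (-(m/2)) (m/2), f x := by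
          apply setIntegral_le_symm hf.2.1 (mono_of_even_qc hfe hfq) m hm0 A' hA'm
          rw [hA'v, hmvol]
        have h3 : (∫ x in Set.Ioo (-(m/2)) (m/2), f x)
            = ∫ x in Set.Ioo (-(m/2)) (m/2), S.indicator f x := by
          rw [setIntegral_indicator hS, Set.inter_eq_left.mpr hsub]
        rw [← h3]
        exact le_trans h1 (le_trans hA'le h2)
    · -- large case : a set containing (-c, c)
      push_neg at hcase
      refine ⟨Set.Ioo (-c) (m - c), measurableSet_Ioo, ?_, ?_⟩
      · rw [Real.volume_Ioo, ← hmvol]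
        norm_num
      · have hsub : S ⊆ Set.Ioo (-c) (m - c) := by
          rw [hS_def]
          apply Set.Ioo_subset_Ioo (le_refl _)
          linarith
        have h1 : (∫ x in B, g x * h x) ≤ Z := by
          rw [hZ_def]
          apply setIntegral_le_integral hGHint
          filter_upwards with x using hGHnn x
        have h2 : (∫ x in Set.Ioo (-c) (m - c), S.indicator f x) = Z := by
          rw [setIntegral_indicator hS, Set.inter_eq_right.mpr hsub,
            ← integral_indicator hS, ← hFind, hZ_def]
          exact heq
        rw [h2]
        exact h1
  obtain ⟨A, hAm, hAvol, hAle⟩ := key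
  refine ⟨A, hAm, hAvol, ?_⟩
  have hZeq : (∫ x, f x * Set.indicator (Set.Ioo (-c) c) (fun _ => (1:ℝ)) x) = Z :=
    heq
  simp only [hZeq]
  rw [integral_div, integral_div]
  rw [show (∫ x, f x * S.indicator (fun _ => (1:ℝ)) x) = Z from hZeq]
  refine (div_le_div_iff_of_pos_right hpos).mpr ?_
  rw [show (∫ x in A, f x * S.indicator (fun _ => (1:ℝ)) x)
      = ∫ x in A, S.indicator f x from by rw [hFind]]
  exact hAle
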